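/- For any formal group law F over a commutative Q-algebra R, there exists a unique power series f(x) ∈ R[[x]] with f(0)=0 and f'(0)=1 such that f(F(x,y)) = f(x) + f(y). This f is called the logarithm of F. -/

import Mathlib

open scoped Classical
noncomputable section


/-! ### Substitution machinery for (multivariable) formal power series -/

variable {R : Type*} [CommRing R] {σ : Type*}

/-- Build a multivariate power series from its coefficient function. -/
def mvmk (f : (σ →₀ ℕ) → R) : MvPowerSeries σ R := f

/-- Total degree of a monomial exponent. -/
def wt (d : σ →₀ ℕ) : ℕ := d.sum fun _ n => n

/-- Substitution `f(u)` of a multivariate series `u` with zero constant term into a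
one-variable power series `f`. -/
def pcompMv (f : PowerSeries R) (u : MvPowerSeries σ R) : MvPowerSeries σ R :=
  mvmk fun d => MvPowerSeries.coeff d
    (∑ k ∈ Finset.range (wt d + 1), MvPowerSeries.C (PowerSeries.coeff k f) * u ^ k)

/-- Composition `f(g)` of one-variable power series, for `g` with zero constant term. -/
def pcomp (f g : PowerSeries R) : PowerSeries R :=
  PowerSeries.mk fun n => PowerSeries.coeff n
    (∑ k ∈ Finset.range (n + 1), PowerSeries.C (PowerSeries.coeff k f) * g ^ k)

/-- Substitution `F(a,b)` of two series with zero constant term into a two-variable series. -/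
def subst2 (F : MvPowerSeries (Fin 2) R) (a b : MvPowerSeries σ R) : MvPowerSeries σ R :=
  mvmk fun d => MvPowerSeries.coeff d
    (∑ p ∈ Finset.range (wt d + 1) ×ˢ Finset.range (wt d + 1),
      MvPowerSeries.C
          (MvPowerSeries.coeff (Finsupp.single (0 : Fin 2) p.1 + Finsupp.single (1 : Fin 2) p.2) F)
        * a ^ p.1 * b ^ p.2)

/-- The one-variable power series `f` viewed in variable `i` of a two-variable ring. -/
def toMv (i : Fin 2) (f : PowerSeries R) : MvPowerSeries (Fin 2) R :=
  mvmk fun d => if d = Finsupp.single i (d i) then PowerSeries.coeff (d i) f else 0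

/-- `F` is a one-dimensional formal group law: `F(x,0)=x`, `F(0,y)=y`,
`F(x,F(y,z))=F(F(x,y),z)`. -/
def IsFGL (F : MvPowerSeries (Fin 2) R) : Prop :=
  subst2 F (MvPowerSeries.X 0) 0 = (MvPowerSeries.X 0 : MvPowerSeries (Fin 2) R) ∧
  subst2 F 0 (MvPowerSeries.X 1) = (MvPowerSeries.X 1 : MvPowerSeries (Fin 2) R) ∧
  subst2 F (MvPowerSeries.X 0) (subst2 F (MvPowerSeries.X 1) (MvPowerSeries.X 2)) =
    subst2 F (subst2 F (MvPowerSeries.X 0) (MvPowerSeries.X 1))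
      (MvPowerSeries.X 2 : MvPowerSeries (Fin 3) R)

/-! ### Laurent series machinery -/

/-- The Laurent series variable `x`. -/
def xL : LaurentSeries ℂ := HahnSeries.single 1 1

theorem isPWO_Ici (a : ℤ) : (Set.Ici a).IsPWO := by
  have h : Set.Ici a = (fun n : ℕ => a + n) '' Set.univ := by
    ext n
    simp only [Set.mem_Ici, Set.mem_image, Set.mem_univ, true_and]
    constructor
    · intro h; exact ⟨(n - a).toNat, by omega⟩
    · rintro ⟨m, rfl⟩; omega
  rw [h]
  exact ((Set.isWF_univ_iff.2 ⟨wellFounded_lt⟩).isPWO).image_of_monotone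
    (fun x y hxy => by omega)

/-- Substitution `c(g)` of a Laurent series `g` of order one into a Laurent series `c`,
defined coefficientwise (using `zpow` in the field of Laurent series). -/
def lsubst (g c : LaurentSeries ℂ) : LaurentSeries ℂ :=
  { coeff := fun a => ∑ m ∈ Finset.Icc c.order a, c.coeff m * (g ^ m).coeff a
    isPWO_support' := (isPWO_Ici c.order).mono (by
      intro a ha
      simp only [Function.mem_support] at ha
      by_contra hc
      simp only [Set.mem_Ici, not_le] at hc
      rw [Finset.Icc_eq_empty (by omega), Finset.sum_empty] at ha
      exact ha rfl) }

/-- Formal derivative `d/dx` of a Laurent series. -/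
def lderiv (c : LaurentSeries ℂ) : LaurentSeries ℂ :=
  { coeff := fun a => (a + 1 : ℤ) • c.coeff (a + 1)
    isPWO_support' := (c.isPWO_support.image_of_monotone
        (f := fun m => m - 1) (fun x y h => by dsimp only; omega)).mono (by
      intro a ha
      simp only [Function.mem_support] at ha
      refine ⟨a + 1, ?_, by ring⟩
      intro h0
      exact ha (by rw [h0, smul_zero])) }

/-- `j`-th Hasse derivative `(1/j!) (d/dx)^j` of a Laurent series. -/
def hasse (j : ℕ) (c : LaurentSeries ℂ) : LaurentSeries ℂ := ((Nat.factorial j : ℂ))⁻¹ • lderiv^[j] c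

/-- Taylor-expansion substitution `φ(ψ, w)`: substitute `ψ` (whose constant term in the
`z`-variables is `x`) for `x` and `w` (zero constant term) for `z` in
`φ(x,z) = Σ c_n(x) zⁿ`, via `c_n(ψ) = Σ_j (hasse_j c_n)(x) (ψ - x)^j`. -/
def fullComp (φ : PowerSeries (LaurentSeries ℂ)) (ψ w : MvPowerSeries (Fin 2) (LaurentSeries ℂ)) :
    MvPowerSeries (Fin 2) (LaurentSeries ℂ) :=
  mvmk fun d => MvPowerSeries.coeff d
    (∑ n ∈ Finset.range (wt d + 1), ∑ j ∈ Finset.range (wt d + 1),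
      MvPowerSeries.C (hasse j (PowerSeries.coeff n φ))
        * (ψ - MvPowerSeries.C xL) ^ j * w ^ n)

/-- `φ(x,z) ∈ ℂ((x))[[z]]` is an associate of the formal group law `F`:
`φ(x,0) = x` and `φ(φ(x,z₁),z₂) = φ(x,F(z₁,z₂))`. -/
def IsAssoc (F : MvPowerSeries (Fin 2) ℂ) (φ : PowerSeries (LaurentSeries ℂ)) : Prop :=
  PowerSeries.constantCoeff φ = xL ∧
  fullComp φ (toMv 0 φ) (MvPowerSeries.X 1) =
    fullComp φ (MvPowerSeries.C xL)
      (MvPowerSeries.map (HahnSeries.C : ℂ →+* LaurentSeries ℂ) F)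

/-- Application of a one-variable series `c` (as a Laurent series) to
`ψ ∈ ℂ((x))[[z]]` whose constant term is the base point `w`, by Taylor expansion at `w`. -/
def acompAt (c w : LaurentSeries ℂ) (ψ : PowerSeries (LaurentSeries ℂ)) :
    PowerSeries (LaurentSeries ℂ) :=
  PowerSeries.mk fun n => PowerSeries.coeff n
    (∑ j ∈ Finset.range (n + 1),
      PowerSeries.C (lsubst w (hasse j c)) *
        (ψ - PowerSeries.C w) ^ j)




/-! ### Vertex-algebra machinery -/

/-- `F(x₀,x₂)` viewed in `ℂ((x₀))[[x₂]]`. -/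
def FB (F : MvPowerSeries (Fin 2) ℂ) : PowerSeries (LaurentSeries ℂ) :=
  PowerSeries.mk fun j => HahnSeries.ofPowerSeries ℤ ℂ
    (PowerSeries.mk fun i =>
      MvPowerSeries.coeff (Finsupp.single (0 : Fin 2) i + Finsupp.single (1 : Fin 2) j) F)

/-- Integer power `F(x₀,x₂)^k` computed in `ℂ((x₀))[[x₂]]` (negative powers via
`Ring.inverse`, which is the genuine inverse whenever `F(x,0)=x`). -/
def Fzp (F : MvPowerSeries (Fin 2) ℂ) (k : ℤ) : PowerSeries (LaurentSeries ℂ) :=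
  if 0 ≤ k then (FB F) ^ k.toNat else (Ring.inverse (FB F)) ^ (-k).toNat

/-- The coefficient of `x₀^a x₂^c` in `F(x₀,x₂)^k ∈ ℂ((x₀))[[x₂]]`. -/
def FzC (F : MvPowerSeries (Fin 2) ℂ) (k : ℤ) (a c : ℤ) : ℂ :=
  if 0 ≤ c then (PowerSeries.coeff c.toNat (Fzp F k)).coeff a else 0

variable {V : Type*} [AddCommGroup V] [Module ℂ V]

/-- Vacuum property: `Y(𝟙,x)v = v`. -/
def Vacuum (Y : V → V → HahnSeries ℤ V) (vac : V) : Prop :=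
  ∀ v, Y vac v = HahnSeries.single 0 v

/-- Creation property: `Y(v,x)𝟙 ∈ V[[x]]` with constant term `v`.
(Here `(Y u v).coeff a` is the coefficient of `x^a` in `Y(u,x)v`.) -/
def Creation (Y : V → V → HahnSeries ℤ V) (vac : V) : Prop :=
  ∀ v, (∀ n : ℤ, n < 0 → (Y v vac).coeff n = 0) ∧ (Y v vac).coeff 0 = v

/-- Weak `F`-associativity: for all `u,v,w` there is `l` with
`F(x₀,x₂)^l Y(u,F(x₀,x₂))Y(v,x₂)w = F(x₀,x₂)^l Y(Y(u,x₀)v,x₂)w`,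
expressed through coefficients of `x₀^a x₂^b`. -/
def WeakFAssoc (F : MvPowerSeries (Fin 2) ℂ) (Y : V → V → HahnSeries ℤ V) : Prop :=
  ∀ u v w : V, ∃ l : ℕ, ∀ a b : ℤ,
    (∑ᶠ mn : ℤ × ℤ, FzC F ((l : ℤ) + mn.1) a (b - mn.2) • (Y u ((Y v w).coeff mn.2)).coeff mn.1)
    = ∑ᶠ mn : ℤ × ℤ, FzC F (l : ℤ) (a - mn.1) (b - mn.2) • (Y ((Y u v).coeff mn.1) w).coeff mn.2

/-- Weak commutativity: for all `u,v` there is `k` with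
`(x₁-x₂)^k Y(u,x₁)Y(v,x₂) = (x₁-x₂)^k Y(v,x₂)Y(u,x₁)`, in coefficients of `x₁^a x₂^b`. -/
def WeakComm (Y : V → V → HahnSeries ℤ V) : Prop :=
  ∀ u v : V, ∃ k : ℕ, ∀ (w : V) (a b : ℤ),
    (∑ i ∈ Finset.range (k + 1),
      ((-1 : ℂ) ^ (k - i) * (k.choose i : ℂ)) •
        (Y u ((Y v w).coeff (b - (k - i)))).coeff (a - i))
    = ∑ i ∈ Finset.range (k + 1),
      ((-1 : ℂ) ^ (k - i) * (k.choose i : ℂ)) •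
        (Y v ((Y u w).coeff (a - i))).coeff (b - (k - i))

/-! ### Products of fields in two variables (for Lemma on `g(x₁)-g(x₂)`) -/

variable {W : Type*} [AddCommGroup W] [Module ℂ W]

/-- Coefficient of `x₁^m x₂^n` in `q(x₁,x₂)·a(x₁)b(x₂)w`. -/
def prodCoeff (q : MvPowerSeries (Fin 2) ℂ) (a b : W →ₗ[ℂ] HahnSeries ℤ W) (w : W)
    (m n : ℤ) : W :=
  ∑ᶠ ij : ℕ × ℕ,
    MvPowerSeries.coeff (Finsupp.single (0 : Fin 2) ij.1 + Finsupp.single (1 : Fin 2) ij.2) q •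
      (a ((b w).coeff (n - ij.2))).coeff (m - ij.1)

/-- Coefficient of `x₁^m x₂^n` in `q(x₁,x₂)·b(x₂)a(x₁)w`. -/
def prodCoeff' (q : MvPowerSeries (Fin 2) ℂ) (a b : W →ₗ[ℂ] HahnSeries ℤ W) (w : W)
    (m n : ℤ) : W :=
  ∑ᶠ ij : ℕ × ℕ,
    MvPowerSeries.coeff (Finsupp.single (0 : Fin 2) ij.1 + Finsupp.single (1 : Fin 2) ij.2) q •
      (b ((a w).coeff (m - ij.1))).coeff (n - ij.2)

/-- Membership in `Hom(W, W((x₁,x₂)))` for the two-variable coefficient family. -/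
def MemHom2 (q : MvPowerSeries (Fin 2) ℂ) (a b : W →ₗ[ℂ] HahnSeries ℤ W) : Prop :=
  ∀ w : W, ∃ N : ℕ, ∀ m n : ℤ, (m < -(N : ℤ) ∨ n < -(N : ℤ)) → prodCoeff q a b w m n = 0



namespace VFA
open MvPowerSeries Finset

section Machinery
variable {R : Type*} [CommRing R] {σ : Type*}

theorem coeff_mvmk (f : (σ →₀ ℕ) → R) (d : σ →₀ ℕ) : MvPowerSeries.coeff d (mvmk f) = f d := rfl

theorem wt_zero : wt (0 : σ →₀ ℕ) = 0 := by simp [wt]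

theorem wt_add (d e : σ →₀ ℕ) : wt (d + e) = wt d + wt e :=
  Finsupp.sum_add_index (by simp) (by simp)

theorem wt_single (s : σ) (n : ℕ) : wt (Finsupp.single s n) = n :=
  Finsupp.sum_single_index rfl

theorem wt_eq_zero {d : σ →₀ ℕ} (h : wt d = 0) : d = 0 := by
  ext a
  by_cases ha : a ∈ d.support
  · have := Finset.sum_eq_zero_iff.mp h a ha
    simpa using this
  · simpa using Finsupp.notMem_support_iff.mp ha

/-- All coefficients of weight `< m` vanish. -/
def GeW (m : ℕ) (A : MvPowerSeries σ R) : Prop :=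
  ∀ e : σ →₀ ℕ, wt e < m → MvPowerSeries.coeff e A = 0

theorem GeW.mono {m m' : ℕ} {A : MvPowerSeries σ R} (h : GeW m A) (hm : m' ≤ m) : GeW m' A :=
  fun e he => h e (lt_of_lt_of_le he hm)

theorem geW_one {A : MvPowerSeries σ R} (h : constantCoeff A = 0) : GeW 1 A := by
  intro e he
  have : e = 0 := wt_eq_zero (by omega)
  simpa [this] using h

theorem GeW.add {m : ℕ} {A B : MvPowerSeries σ R} (hA : GeW m A) (hB : GeW m B) :
    GeW m (A + B) := fun e he => by simp [hA e he, hB e he]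

theorem GeW.neg {m : ℕ} {A : MvPowerSeries σ R} (hA : GeW m A) : GeW m (-A) :=
  fun e he => by simp [hA e he]

theorem GeW.sub {m : ℕ} {A B : MvPowerSeries σ R} (hA : GeW m A) (hB : GeW m B) :
    GeW m (A - B) := fun e he => by rw [map_sub, hA e he, hB e he, sub_zero]

theorem geW_zero' {m : ℕ} : GeW m (0 : MvPowerSeries σ R) := fun e _ => by simp

theorem GeW.mul {s t : ℕ} {A B : MvPowerSeries σ R} (hA : GeW s A) (hB : GeW t B) :
    GeW (s + t) (A * B) := by
  intro e he
  rw [MvPowerSeries.coeff_mul]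
  refine Finset.sum_eq_zero fun p hp => ?_
  rw [Finset.HasAntidiagonal.mem_antidiagonal] at hp
  have hw : wt p.1 + wt p.2 = wt e := by rw [← wt_add, hp]
  rcases lt_or_ge (wt p.1) s with h1 | h1
  · rw [hA p.1 h1, zero_mul]
  · rw [hB p.2 (by omega), mul_zero]

theorem GeW.pow {A : MvPowerSeries σ R} (hA : GeW 1 A) (k : ℕ) : GeW k (A ^ k) := by
  induction k with
  | zero => exact fun e he => absurd he (by omega)
  | succ n ih => rw [pow_succ]; exact ih.mul hA

theorem GeW.coeff_eq_zero {m : ℕ} {A : MvPowerSeries σ R} (h : GeW m A) {d : σ →₀ ℕ}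
    (hd : wt d < m) : MvPowerSeries.coeff d A = 0 := h d hd

theorem coeff_eq_of_sub_geW {m : ℕ} {A B : MvPowerSeries σ R} (h : GeW m (A - B)) {d : σ →₀ ℕ}
    (hd : wt d < m) : MvPowerSeries.coeff d A = MvPowerSeries.coeff d B := by
  have := h d hd
  rw [map_sub, sub_eq_zero] at this
  exact this

theorem pow_sub_pow_geW {A L : MvPowerSeries σ R} (hA : GeW 1 A) (hL : GeW 1 L)
    (h : GeW 2 (A - L)) (k : ℕ) : GeW (k + 1) (A ^ k - L ^ k) := by
  induction k with
  | zero => simpa using geW_zero'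
  | succ n ih =>
      have key : A ^ (n+1) - L ^ (n+1) = (A - L) * A ^ n + L * (A ^ n - L ^ n) := by ring
      rw [key]
      have h1 : GeW (2 + n) ((A - L) * A ^ n) := h.mul (hA.pow n)
      have h2 : GeW (1 + (n + 1)) (L * (A ^ n - L ^ n)) := hL.mul ih
      exact (h1.mono (by omega)).add (h2.mono (by omega))


/-! Fin 2 exponent normal form -/

def fs (p : ℕ × ℕ) : Fin 2 →₀ ℕ := Finsupp.single 0 p.1 + Finsupp.single 1 p.2

theorem fs_apply0 (p : ℕ × ℕ) : fs p 0 = p.1 := by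
  simp [fs, Finsupp.single_apply]

theorem fs_apply1 (p : ℕ × ℕ) : fs p 1 = p.2 := by
  simp [fs, Finsupp.single_apply]

theorem eq_fs (d : Fin 2 →₀ ℕ) : d = fs (d 0, d 1) := by
  ext i
  fin_cases i
  · simp [fs_apply0]
  · simpa using (fs_apply1 (d 0, d 1)).symm

theorem fs_inj {p q : ℕ × ℕ} (h : fs p = fs q) : p = q := by
  have h0 := congrArg (fun d : Fin 2 →₀ ℕ => d 0) h
  have h1 := congrArg (fun d : Fin 2 →₀ ℕ => d 1) h
  simp only [fs_apply0, fs_apply1] at h0 h1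
  exact Prod.ext h0 h1

theorem wt_fs (p : ℕ × ℕ) : wt (fs p) = p.1 + p.2 := by
  rw [fs, wt_add, wt_single, wt_single]

theorem fs_add (p q : ℕ × ℕ) : fs p + fs q = fs (p.1 + q.1, p.2 + q.2) := by
  simp only [fs, Finsupp.single_add]
  abel

/-- Sum over the `Finsupp` antidiagonal of a `Fin 2` exponent as a sum over a box. -/
theorem sum_antidiagonal_fin2 {M : Type*} [AddCommMonoid M] (d : Fin 2 →₀ ℕ)
    (g : (Fin 2 →₀ ℕ) → (Fin 2 →₀ ℕ) → M) :
    ∑ x ∈ Finset.HasAntidiagonal.antidiagonal d, g x.1 x.2 =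
      ∑ p ∈ Finset.range (d 0 + 1) ×ˢ Finset.range (d 1 + 1),
        g (fs p) (fs (d 0 - p.1, d 1 - p.2)) := by
  refine Finset.sum_nbij' (i := fun x => (x.1 0, x.1 1))
    (j := fun p => (fs p, fs (d 0 - p.1, d 1 - p.2))) ?_ ?_ ?_ ?_ ?_
  · intro x hx
    rw [Finset.HasAntidiagonal.mem_antidiagonal] at hx
    have h0 : x.1 0 + x.2 0 = d 0 := by rw [← hx]; simp
    have h1 : x.1 1 + x.2 1 = d 1 := by rw [← hx]; simp
    simp only [Finset.mem_product, Finset.mem_range]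
    omega
  · intro p hp
    simp only [Finset.mem_product, Finset.mem_range] at hp
    rw [Finset.HasAntidiagonal.mem_antidiagonal, fs_add]
    conv_rhs => rw [eq_fs d]
    congr 1
    simp only [Prod.mk.injEq]
    omega
  · intro x hx
    rw [Finset.HasAntidiagonal.mem_antidiagonal] at hx
    have h0 : x.1 0 + x.2 0 = d 0 := by rw [← hx]; simp
    have h1 : x.1 1 + x.2 1 = d 1 := by rw [← hx]; simp
    have e1 : x.1 = fs (x.1 0, x.1 1) := eq_fs x.1
    have e2 : x.2 = fs (d 0 - x.1 0, d 1 - x.1 1) := by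
      rw [eq_fs x.2]; congr 1; simp only [Prod.mk.injEq]; omega
    exact Prod.ext e1.symm e2.symm
  · intro p hp
    simp [fs_apply0, fs_apply1]
  · intro x hx
    congr 1 <;> [exact eq_fs x.1; skip]
    rw [Finset.HasAntidiagonal.mem_antidiagonal] at hx
    have h0 : x.1 0 + x.2 0 = d 0 := by rw [← hx]; simp
    have h1 : x.1 1 + x.2 1 = d 1 := by rw [← hx]; simp
    rw [eq_fs x.2]; congr 1; simp only [Prod.mk.injEq]; omega

/-- Coefficient of a product of two-variable series via a box sum. -/
theorem coeff_mul_fin2 (φ ψ : MvPowerSeries (Fin 2) R) (d : Fin 2 →₀ ℕ) :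
    MvPowerSeries.coeff d (φ * ψ) =
      ∑ p ∈ Finset.range (d 0 + 1) ×ˢ Finset.range (d 1 + 1),
        MvPowerSeries.coeff (fs p) φ *
          MvPowerSeries.coeff (fs (d 0 - p.1, d 1 - p.2)) ψ := by
  rw [MvPowerSeries.coeff_mul]
  exact sum_antidiagonal_fin2 d fun a b => MvPowerSeries.coeff a φ * MvPowerSeries.coeff b ψ

theorem coeff_pow_mul_eq_zero {A B : MvPowerSeries σ R} (hA : MvPowerSeries.constantCoeff A = 0)
    (hB : MvPowerSeries.constantCoeff B = 0) {d : σ →₀ ℕ} {i j : ℕ} (h : wt d < i + j) :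
    MvPowerSeries.coeff d (A ^ i * B ^ j) = 0 :=
  (((geW_one hA).pow i).mul ((geW_one hB).pow j)).coeff_eq_zero h

theorem coeff_pow_eq_zero {A : MvPowerSeries σ R} (hA : MvPowerSeries.constantCoeff A = 0)
    {d : σ →₀ ℕ} {i : ℕ} (h : wt d < i) : MvPowerSeries.coeff d (A ^ i) = 0 :=
  ((geW_one hA).pow i).coeff_eq_zero h

/-- Normal form for coefficients of `subst2`, with any sufficiently large truncation bound. -/
theorem coeff_subst2 (G : MvPowerSeries (Fin 2) R) {A B : MvPowerSeries σ R}
    (hA : MvPowerSeries.constantCoeff A = 0) (hB : MvPowerSeries.constantCoeff B = 0)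
    (d : σ →₀ ℕ) {N : ℕ} (hN : wt d ≤ N) :
    MvPowerSeries.coeff d (subst2 G A B) =
      ∑ p ∈ Finset.range (N + 1) ×ˢ Finset.range (N + 1),
        MvPowerSeries.coeff (fs p) G * MvPowerSeries.coeff d (A ^ p.1 * B ^ p.2) := by
  have base : MvPowerSeries.coeff d (subst2 G A B) =
      ∑ p ∈ Finset.range (wt d + 1) ×ˢ Finset.range (wt d + 1),
        MvPowerSeries.coeff (fs p) G * MvPowerSeries.coeff d (A ^ p.1 * B ^ p.2) := by
    rw [subst2, coeff_mvmk, map_sum]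
    refine Finset.sum_congr rfl fun p _ => ?_
    rw [mul_assoc, MvPowerSeries.coeff_C_mul]
    rfl
  rw [base]
  refine Finset.sum_subset ?_ ?_
  · intro p hp
    simp only [Finset.mem_product, Finset.mem_range] at hp ⊢
    omega
  · intro p hp hp'
    simp only [Finset.mem_product, Finset.mem_range] at hp hp'
    rw [coeff_pow_mul_eq_zero hA hB (by omega), mul_zero]

/-- Normal form for coefficients of `pcompMv`. -/
theorem coeff_pcompMv (f : PowerSeries R) {u : MvPowerSeries σ R}
    (hu : MvPowerSeries.constantCoeff u = 0) (d : σ →₀ ℕ) {N : ℕ} (hN : wt d ≤ N) :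
    MvPowerSeries.coeff d (pcompMv f u) =
      ∑ k ∈ Finset.range (N + 1),
        PowerSeries.coeff k f * MvPowerSeries.coeff d (u ^ k) := by
  have base : MvPowerSeries.coeff d (pcompMv f u) =
      ∑ k ∈ Finset.range (wt d + 1),
        PowerSeries.coeff k f * MvPowerSeries.coeff d (u ^ k) := by
    rw [pcompMv, coeff_mvmk, map_sum]
    exact Finset.sum_congr rfl fun k _ => MvPowerSeries.coeff_C_mul _ _ _
  rw [base]
  refine Finset.sum_subset (by simp only [Finset.range_subset_range]; omega) ?_
  intro k hk hk'
  simp only [Finset.mem_range] at hk hk'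
  rw [coeff_pow_eq_zero hu (by omega), mul_zero]

theorem constantCoeff_subst2 (G : MvPowerSeries (Fin 2) R) {A B : MvPowerSeries σ R}
    (hA : MvPowerSeries.constantCoeff A = 0) (hB : MvPowerSeries.constantCoeff B = 0) :
    MvPowerSeries.constantCoeff (subst2 G A B) = MvPowerSeries.constantCoeff G := by
  rw [← MvPowerSeries.coeff_zero_eq_constantCoeff_apply,
    coeff_subst2 G hA hB 0 (le_of_eq wt_zero)]
  rw [Finset.range_one, Finset.singleton_product_singleton, Finset.sum_singleton]
  have h0 : fs 0 = 0 := by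
    ext i; fin_cases i <;> simp [fs, Finsupp.single_apply]
  simp [h0, fs]

theorem constantCoeff_pcompMv (f : PowerSeries R) {u : MvPowerSeries σ R}
    (hu : MvPowerSeries.constantCoeff u = 0) :
    MvPowerSeries.constantCoeff (pcompMv f u) = PowerSeries.constantCoeff f := by
  rw [← MvPowerSeries.coeff_zero_eq_constantCoeff_apply,
    coeff_pcompMv f hu 0 (le_of_eq wt_zero), Finset.range_one, Finset.sum_singleton]
  simp

theorem subst2_add (G H : MvPowerSeries (Fin 2) R) {A B : MvPowerSeries σ R}
    (hA : MvPowerSeries.constantCoeff A = 0) (hB : MvPowerSeries.constantCoeff B = 0) :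
    subst2 (G + H) A B = subst2 G A B + subst2 H A B := by
  ext d
  rw [map_add, coeff_subst2 _ hA hB d (le_refl _), coeff_subst2 _ hA hB d (le_refl _),
    coeff_subst2 _ hA hB d (le_refl _), ← Finset.sum_add_distrib]
  exact Finset.sum_congr rfl fun p _ => by rw [map_add, add_mul]

theorem pcompMv_sub (f g : PowerSeries R) {u : MvPowerSeries σ R}
    (hu : MvPowerSeries.constantCoeff u = 0) :
    pcompMv (f - g) u = pcompMv f u - pcompMv g u := by
  ext d
  rw [map_sub, coeff_pcompMv _ hu d (le_refl _), coeff_pcompMv _ hu d (le_refl _),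
    coeff_pcompMv _ hu d (le_refl _), ← Finset.sum_sub_distrib]
  exact Finset.sum_congr rfl fun k _ => by rw [map_sub, sub_mul]

theorem coeff_toMv0_fs (f : PowerSeries R) (p : ℕ × ℕ) :
    MvPowerSeries.coeff (fs p) (toMv 0 f) =
      if p.2 = 0 then PowerSeries.coeff p.1 f else 0 := by
  rw [toMv, coeff_mvmk]
  by_cases h : p.2 = 0
  · rw [if_pos h, if_pos]
    · rw [fs_apply0]
    · rw [fs_apply0]
      conv_lhs => rw [show p = (p.1, 0) from by rw [← h]]
      simp [fs]
  · rw [if_neg h, if_neg]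
    intro hc
    have := congrArg (fun d : Fin 2 →₀ ℕ => d 1) hc
    simp only [fs_apply1, Finsupp.single_apply] at this
    simp at this
    exact h this

theorem coeff_toMv1_fs (f : PowerSeries R) (p : ℕ × ℕ) :
    MvPowerSeries.coeff (fs p) (toMv 1 f) =
      if p.1 = 0 then PowerSeries.coeff p.2 f else 0 := by
  rw [toMv, coeff_mvmk]
  by_cases h : p.1 = 0
  · rw [if_pos h, if_pos]
    · rw [fs_apply1]
    · rw [fs_apply1]
      conv_lhs => rw [show p = (0, p.2) from by rw [← h]]
      simp [fs]
  · rw [if_neg h, if_neg]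
    intro hc
    have := congrArg (fun d : Fin 2 →₀ ℕ => d 0) hc
    simp only [fs_apply0, Finsupp.single_apply] at this
    simp at this
    exact h this

theorem toMv_sub (i : Fin 2) (f g : PowerSeries R) :
    toMv i (f - g) = toMv i f - toMv i g := by
  ext d
  rw [map_sub, toMv, toMv, toMv, coeff_mvmk, coeff_mvmk, coeff_mvmk]
  split_ifs with h
  · rw [map_sub]
  · rw [sub_zero]

theorem subst2_toMv0 (f : PowerSeries R) {A B : MvPowerSeries σ R}
    (hA : MvPowerSeries.constantCoeff A = 0) (hB : MvPowerSeries.constantCoeff B = 0) :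
    subst2 (toMv 0 f) A B = pcompMv f A := by
  ext d
  rw [coeff_subst2 _ hA hB d (le_refl _), coeff_pcompMv f hA d (le_refl _), Finset.sum_product]
  refine Finset.sum_congr rfl fun k _ => ?_
  rw [Finset.sum_eq_single 0]
  · rw [coeff_toMv0_fs, if_pos rfl, pow_zero, mul_one]
  · intro l _ hl
    rw [coeff_toMv0_fs, if_neg hl, zero_mul]
  · intro h
    exact absurd (Finset.mem_range.mpr (by omega)) h

theorem subst2_toMv1 (f : PowerSeries R) {A B : MvPowerSeries σ R}
    (hA : MvPowerSeries.constantCoeff A = 0) (hB : MvPowerSeries.constantCoeff B = 0) :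
    subst2 (toMv 1 f) A B = pcompMv f B := by
  ext d
  rw [coeff_subst2 _ hA hB d (le_refl _), coeff_pcompMv f hB d (le_refl _), Finset.sum_product_right]
  refine Finset.sum_congr rfl fun k _ => ?_
  rw [Finset.sum_eq_single 0]
  · rw [coeff_toMv1_fs, if_pos rfl, pow_zero, one_mul]
  · intro l _ hl
    rw [coeff_toMv1_fs, if_neg hl, zero_mul]
  · intro h
    exact absurd (Finset.mem_range.mpr (by omega)) h

theorem fs_zero : fs (0, 0) = 0 := by
  ext i; fin_cases i <;> simp [fs, Finsupp.single_apply]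

theorem subst2_one {A B : MvPowerSeries σ R} (hA : MvPowerSeries.constantCoeff A = 0)
    (hB : MvPowerSeries.constantCoeff B = 0) :
    subst2 (1 : MvPowerSeries (Fin 2) R) A B = 1 := by
  ext d
  rw [coeff_subst2 _ hA hB d (le_refl _), Finset.sum_eq_single (0, 0)]
  · rw [fs_zero]
    simp
  · intro p _ hp
    have hne : fs p ≠ 0 := by
      intro hc
      exact hp (fs_inj (by rw [hc, fs_zero]))
    rw [MvPowerSeries.coeff_one, if_neg hne, zero_mul]
  · intro h
    exact absurd (by simp : ((0, 0) : ℕ × ℕ) ∈ _) h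

theorem subst2_mul (G H : MvPowerSeries (Fin 2) R) {A B : MvPowerSeries σ R}
    (hA : MvPowerSeries.constantCoeff A = 0) (hB : MvPowerSeries.constantCoeff B = 0) :
    subst2 (G * H) A B = subst2 G A B * subst2 H A B := by
  ext d
  set N := wt d with hNdef
  set box := Finset.range (N + 1) ×ˢ Finset.range (N + 1) with hbox
  have hboxmem : ∀ p : ℕ × ℕ, p ∈ box ↔ p.1 ≤ N ∧ p.2 ≤ N := by
    intro p; simp [hbox, Finset.mem_product, Finset.mem_range]
  set T : ℕ × ℕ → ℕ × ℕ → R := fun q r =>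
    MvPowerSeries.coeff (fs q) G * MvPowerSeries.coeff (fs r) H *
      MvPowerSeries.coeff d (A ^ (q.1 + r.1) * B ^ (q.2 + r.2)) with hT
  -- RHS equals the full double sum of T
  have hRHS : MvPowerSeries.coeff d (subst2 G A B * subst2 H A B)
      = ∑ q ∈ box, ∑ r ∈ box, T q r := by
    rw [MvPowerSeries.coeff_mul]
    have h1 : ∀ x ∈ Finset.HasAntidiagonal.antidiagonal d,
        MvPowerSeries.coeff x.1 (subst2 G A B) * MvPowerSeries.coeff x.2 (subst2 H A B)
          = ∑ q ∈ box, ∑ r ∈ box,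
              MvPowerSeries.coeff (fs q) G * MvPowerSeries.coeff (fs r) H *
                (MvPowerSeries.coeff x.1 (A ^ q.1 * B ^ q.2) *
                  MvPowerSeries.coeff x.2 (A ^ r.1 * B ^ r.2)) := by
      intro x hx
      rw [Finset.HasAntidiagonal.mem_antidiagonal] at hx
      have hw1 : wt x.1 ≤ N := by rw [hNdef, ← hx, wt_add]; omega
      have hw2 : wt x.2 ≤ N := by rw [hNdef, ← hx, wt_add]; omega
      rw [coeff_subst2 _ hA hB _ hw1, coeff_subst2 _ hA hB _ hw2, Finset.sum_mul_sum]
      exact Finset.sum_congr rfl fun q _ => Finset.sum_congr rfl fun r _ => by ring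
    rw [Finset.sum_congr rfl h1, Finset.sum_comm]
    refine Finset.sum_congr rfl fun q _ => ?_
    rw [Finset.sum_comm]
    refine Finset.sum_congr rfl fun r _ => ?_
    rw [← Finset.mul_sum, ← MvPowerSeries.coeff_mul]
    have : A ^ q.1 * B ^ q.2 * (A ^ r.1 * B ^ r.2) = A ^ (q.1 + r.1) * B ^ (q.2 + r.2) := by
      rw [pow_add, pow_add]; ring
    rw [this]
  rw [hRHS, coeff_subst2 _ hA hB d (le_refl _)]
  -- LHS: expand the product coefficient as a box sum with indicator
  have claim1 : ∀ p ∈ box,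
      MvPowerSeries.coeff (fs p) (G * H) * MvPowerSeries.coeff d (A ^ p.1 * B ^ p.2)
        = ∑ q ∈ box, ∑ r ∈ box,
            if q.1 + r.1 = p.1 ∧ q.2 + r.2 = p.2 then T q r else 0 := by
    intro p hp
    rw [hboxmem] at hp
    rw [coeff_mul_fin2, fs_apply0, fs_apply1, Finset.sum_mul]
    rw [← Finset.sum_subset (s₁ := Finset.range (p.1 + 1) ×ˢ Finset.range (p.2 + 1))
      (s₂ := box) ?hsub ?hvan]
    · refine Finset.sum_congr rfl fun q hq => ?_
      simp only [Finset.mem_product, Finset.mem_range] at hq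
      rw [Finset.sum_eq_single ((p.1 - q.1, p.2 - q.2) : ℕ × ℕ)]
      · rw [if_pos (by simp; omega)]
        rw [hT]
        have e1 : q.1 + (p.1 - q.1) = p.1 := by omega
        have e2 : q.2 + (p.2 - q.2) = p.2 := by omega
        simp only [e1, e2]
      · intro r _ hr
        rw [if_neg]
        intro hc
        exact hr (by cases r; simp at hc ⊢; omega)
      · intro hnotmem
        exact absurd ((hboxmem _).mpr (by simp; omega)) hnotmem
    case hsub =>
      intro q hq
      simp only [Finset.mem_product, Finset.mem_range] at hq
      rw [hboxmem]; omega
    case hvan =>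
      intro q hq hq'
      simp only [Finset.mem_product, Finset.mem_range] at hq'
      refine Finset.sum_eq_zero fun r _ => ?_
      rw [if_neg]
      intro hc
      exact hq' (by omega)
  rw [Finset.sum_congr rfl claim1, Finset.sum_comm]
  refine Finset.sum_congr rfl fun q hq => ?_
  rw [Finset.sum_comm]
  refine Finset.sum_congr rfl fun r hr => ?_
  -- collapse the p-sum
  have hcond : ∀ p : ℕ × ℕ, (q.1 + r.1 = p.1 ∧ q.2 + r.2 = p.2) ↔ p = (q.1 + r.1, q.2 + r.2) := by
    intro p; cases p; simp; omega
  simp only [hcond]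
  rw [Finset.sum_ite_eq' box ((q.1 + r.1, q.2 + r.2) : ℕ × ℕ) (fun _ => T q r)]
  split_ifs with hmem
  · rfl
  · rw [hboxmem] at hmem
    have h0 : MvPowerSeries.coeff d (A ^ (q.1 + r.1) * B ^ (q.2 + r.2)) = 0 :=
      coeff_pow_mul_eq_zero hA hB (by omega)
    simp only [hT, h0, mul_zero]

theorem subst2_pow (G : MvPowerSeries (Fin 2) R) {A B : MvPowerSeries σ R}
    (hA : MvPowerSeries.constantCoeff A = 0) (hB : MvPowerSeries.constantCoeff B = 0)
    (k : ℕ) : subst2 (G ^ k) A B = (subst2 G A B) ^ k := by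
  induction k with
  | zero => simpa using subst2_one hA hB
  | succ n ih => rw [pow_succ, pow_succ, subst2_mul _ _ hA hB, ih]

/-- Composition law: substituting into a one-variable composition. -/
theorem pcompMv_subst2 (f : PowerSeries R) (F : MvPowerSeries (Fin 2) R)
    (hF0 : MvPowerSeries.constantCoeff F = 0) {A B : MvPowerSeries σ R}
    (hA : MvPowerSeries.constantCoeff A = 0) (hB : MvPowerSeries.constantCoeff B = 0) :
    pcompMv f (subst2 F A B) = subst2 (pcompMv f F) A B := by
  ext d
  set N := wt d with hNdef
  have hs : MvPowerSeries.constantCoeff (subst2 F A B) = 0 := by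
    rw [constantCoeff_subst2 _ hA hB, hF0]
  rw [coeff_pcompMv f hs d (le_refl _), coeff_subst2 _ hA hB d (le_refl _)]
  have step : ∀ p : ℕ × ℕ, p ∈ Finset.range (N + 1) ×ˢ Finset.range (N + 1) →
      MvPowerSeries.coeff (fs p) (pcompMv f F) * MvPowerSeries.coeff d (A ^ p.1 * B ^ p.2)
        = ∑ k ∈ Finset.range (N + 1), PowerSeries.coeff k f *
            (MvPowerSeries.coeff (fs p) (F ^ k) *
              MvPowerSeries.coeff d (A ^ p.1 * B ^ p.2)) := by
    intro p _
    by_cases hw : p.1 + p.2 ≤ N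
    · rw [coeff_pcompMv f hF0 (fs p) (N := N) (by rw [wt_fs]; exact hw), Finset.sum_mul]
      exact Finset.sum_congr rfl fun k _ => by ring
    · rw [coeff_pow_mul_eq_zero hA hB (by omega : wt d < p.1 + p.2)]
      simp
  rw [Finset.sum_congr rfl step, Finset.sum_comm]
  refine Finset.sum_congr rfl fun k _ => ?_
  rw [← Finset.mul_sum, ← coeff_subst2 (F ^ k) hA hB d (le_refl _), subst2_pow F hA hB]

theorem fs_m0 (m : ℕ) : fs (m, 0) = Finsupp.single (0 : Fin 2) m := by simp [fs]
theorem fs_0m (m : ℕ) : fs (0, m) = Finsupp.single (1 : Fin 2) m := by simp [fs]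

theorem coeff_mul_fs (φ ψ : MvPowerSeries (Fin 2) R) (m l : ℕ) :
    MvPowerSeries.coeff (fs (m, l)) (φ * ψ) =
      ∑ p ∈ Finset.range (m + 1) ×ˢ Finset.range (l + 1),
        MvPowerSeries.coeff (fs p) φ *
          MvPowerSeries.coeff (fs (m - p.1, l - p.2)) ψ := by
  rw [coeff_mul_fin2]
  simp only [fs_apply0, fs_apply1]

theorem coeff_F_pure0 {F : MvPowerSeries (Fin 2) R}
    (hF1 : subst2 F (MvPowerSeries.X 0) 0 = (MvPowerSeries.X 0 : MvPowerSeries (Fin 2) R))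
    (m : ℕ) : MvPowerSeries.coeff (fs (m, 0)) F = if m = 1 then 1 else 0 := by
  have h := congrArg (MvPowerSeries.coeff (Finsupp.single (0 : Fin 2) m)) hF1
  rw [coeff_subst2 F (MvPowerSeries.constantCoeff_X 0) (map_zero _)
      (Finsupp.single (0 : Fin 2) m) (N := m) (le_of_eq (wt_single _ _)),
    MvPowerSeries.coeff_X] at h
  rw [Finset.sum_eq_single (m, 0)] at h
  · rw [fs_m0] at h ⊢
    rw [pow_zero, mul_one, MvPowerSeries.X_pow_eq, MvPowerSeries.coeff_monomial,
      if_pos rfl, mul_one] at h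
    rw [h]
    by_cases hm : m = 1
    · rw [if_pos hm, if_pos (by rw [hm])]
    · rw [if_neg hm, if_neg (fun hc => hm (Finsupp.single_injective (0 : Fin 2) hc))]
  · intro p _ hp
    by_cases h2 : p.2 = 0
    · have h1 : p.1 ≠ m := fun hc => hp (by cases p; simp_all)
      rw [h2, pow_zero, mul_one, MvPowerSeries.X_pow_eq, MvPowerSeries.coeff_monomial,
        if_neg (fun hc => h1 (Finsupp.single_injective (0 : Fin 2) hc).symm), mul_zero]
    · rw [zero_pow h2, mul_zero, map_zero, mul_zero]
  · intro hmem
    exact absurd (by simp : (m, 0) ∈ _) hmem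

theorem coeff_F_pure1 {F : MvPowerSeries (Fin 2) R}
    (hF2 : subst2 F 0 (MvPowerSeries.X 1) = (MvPowerSeries.X 1 : MvPowerSeries (Fin 2) R))
    (m : ℕ) : MvPowerSeries.coeff (fs (0, m)) F = if m = 1 then 1 else 0 := by
  have h := congrArg (MvPowerSeries.coeff (Finsupp.single (1 : Fin 2) m)) hF2
  rw [coeff_subst2 F (map_zero _) (MvPowerSeries.constantCoeff_X 1)
      (Finsupp.single (1 : Fin 2) m) (N := m) (le_of_eq (wt_single _ _)),
    MvPowerSeries.coeff_X] at h
  rw [Finset.sum_eq_single (0, m)] at h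
  · rw [fs_0m] at h ⊢
    rw [pow_zero, one_mul, MvPowerSeries.X_pow_eq, MvPowerSeries.coeff_monomial,
      if_pos rfl, mul_one] at h
    rw [h]
    by_cases hm : m = 1
    · rw [if_pos hm, if_pos (by rw [hm])]
    · rw [if_neg hm, if_neg (fun hc => hm (Finsupp.single_injective (1 : Fin 2) hc))]
  · intro p _ hp
    by_cases h1 : p.1 = 0
    · have h2 : p.2 ≠ m := fun hc => hp (by cases p; simp_all)
      rw [h1, pow_zero, one_mul, MvPowerSeries.X_pow_eq, MvPowerSeries.coeff_monomial,
        if_neg (fun hc => h2 (Finsupp.single_injective (1 : Fin 2) hc).symm), mul_zero]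
    · rw [zero_pow h1, zero_mul, map_zero, mul_zero]
  · intro hmem
    exact absurd (by simp : (0, m) ∈ _) hmem

theorem constantCoeff_FGL {F : MvPowerSeries (Fin 2) R}
    (hF1 : subst2 F (MvPowerSeries.X 0) 0 = (MvPowerSeries.X 0 : MvPowerSeries (Fin 2) R)) :
    MvPowerSeries.constantCoeff F = 0 := by
  have := coeff_F_pure0 hF1 0
  rw [fs_zero] at this
  simpa using this

theorem coeff_pow_pure0 {F : MvPowerSeries (Fin 2) R}
    (hF1 : subst2 F (MvPowerSeries.X 0) 0 = (MvPowerSeries.X 0 : MvPowerSeries (Fin 2) R))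
    (k m : ℕ) : MvPowerSeries.coeff (fs (m, 0)) (F ^ k) = if k = m then 1 else 0 := by
  induction k generalizing m with
  | zero =>
      rw [pow_zero, MvPowerSeries.coeff_one]
      by_cases hm : m = 0
      · subst hm; rw [if_pos fs_zero, if_pos rfl]
      · rw [if_neg (fun hc => hm (by simpa using fs_inj (hc.trans fs_zero.symm))),
          if_neg (fun hc => hm hc.symm)]
  | succ k ih =>
      rw [pow_succ', coeff_mul_fs]
      cases m with
      | zero =>
          rw [Finset.range_one, Finset.singleton_product_singleton, Finset.sum_singleton]
          rw [coeff_F_pure0 hF1 0]  -- fs (0,0)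
          simp
      | succ m =>
          rw [Finset.sum_eq_single (1, 0)]
          · simp only [coeff_F_pure0 hF1, Nat.add_sub_cancel, Nat.sub_zero, if_pos rfl, one_mul, ih]
            by_cases h : k = m
            · simp [h]
            · simp [h]
          · intro p hp hne
            simp only [Finset.mem_product, Finset.mem_range] at hp
            have h2 : p.2 = 0 := by omega
            have : MvPowerSeries.coeff (fs p) F = 0 := by
              rw [show p = (p.1, 0) from by cases p; simp_all]
              rw [coeff_F_pure0 hF1 p.1, if_neg (fun hc => hne (by cases p; simp_all))]
            rw [this, zero_mul]
          · intro hmem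
            exact absurd (by simp : ((1 : ℕ), (0 : ℕ)) ∈ _) hmem

theorem coeff_pow_pure1 {F : MvPowerSeries (Fin 2) R}
    (hF2 : subst2 F 0 (MvPowerSeries.X 1) = (MvPowerSeries.X 1 : MvPowerSeries (Fin 2) R))
    (k m : ℕ) : MvPowerSeries.coeff (fs (0, m)) (F ^ k) = if k = m then 1 else 0 := by
  induction k generalizing m with
  | zero =>
      rw [pow_zero, MvPowerSeries.coeff_one]
      by_cases hm : m = 0
      · subst hm; rw [if_pos fs_zero, if_pos rfl]
      · rw [if_neg (fun hc => hm (by simpa using fs_inj (hc.trans fs_zero.symm))),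
          if_neg (fun hc => hm hc.symm)]
  | succ k ih =>
      rw [pow_succ', coeff_mul_fs]
      cases m with
      | zero =>
          rw [Finset.range_one, Finset.singleton_product_singleton, Finset.sum_singleton]
          rw [coeff_F_pure1 hF2 0]
          simp
      | succ m =>
          rw [Finset.sum_eq_single (0, 1)]
          · simp only [coeff_F_pure1 hF2, Nat.add_sub_cancel, Nat.sub_zero, Nat.sub_self,
              if_pos rfl, one_mul, ih]
            by_cases h : k = m
            · simp [h]
            · simp [h]
          · intro p hp hne
            simp only [Finset.mem_product, Finset.mem_range] at hp
            have h1 : p.1 = 0 := by omega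
            have : MvPowerSeries.coeff (fs p) F = 0 := by
              rw [show p = (0, p.2) from by cases p; simp_all]
              rw [coeff_F_pure1 hF2 p.2, if_neg (fun hc => hne (by cases p; simp_all))]
            rw [this, zero_mul]
          · intro hmem
            exact absurd (by simp : ((0 : ℕ), (1 : ℕ)) ∈ _) hmem

/-- Mixed coefficients of powers: `(F^(k+1))_{(1,m)} = (k+1) * F_{(1, m-k)}`. -/
theorem coeff_pow_mixed {F : MvPowerSeries (Fin 2) R}
    (hF1 : subst2 F (MvPowerSeries.X 0) 0 = (MvPowerSeries.X 0 : MvPowerSeries (Fin 2) R))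
    (hF2 : subst2 F 0 (MvPowerSeries.X 1) = (MvPowerSeries.X 1 : MvPowerSeries (Fin 2) R))
    (k m : ℕ) : MvPowerSeries.coeff (fs (1, m)) (F ^ (k + 1)) =
      ((k : R) + 1) * (if k ≤ m then MvPowerSeries.coeff (fs (1, m - k)) F else 0) := by
  induction k generalizing m with
  | zero => simp
  | succ k ih =>
      rw [pow_succ, coeff_mul_fs]
      rw [Finset.sum_product]
      rw [Finset.sum_range_succ, Finset.sum_range_succ, Finset.sum_range_zero, zero_add]
      -- first block : p.1 = 0 : (F^(k+1))_{(0,b)} * F_{(1, m-b)} = δ_{k+1,b} …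
      have hblock0 : ∑ b ∈ Finset.range (m + 1),
          MvPowerSeries.coeff (fs (0, b)) (F ^ (k + 1)) *
            MvPowerSeries.coeff (fs (1 - 0, m - b)) F
          = if k + 1 ≤ m then MvPowerSeries.coeff (fs (1, m - (k + 1))) F else 0 := by
        by_cases hkm : k + 1 ≤ m
        · rw [if_pos hkm, Finset.sum_eq_single (k + 1)]
          · rw [coeff_pow_pure1 hF2, if_pos rfl, one_mul]
          · intro b _ hb
            rw [coeff_pow_pure1 hF2, if_neg (fun hc => hb hc.symm), zero_mul]
          · intro hmem
            exact absurd (Finset.mem_range.mpr (by omega)) hmem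
        · rw [if_neg hkm]
          refine Finset.sum_eq_zero fun b hb => ?_
          rw [Finset.mem_range] at hb
          rw [coeff_pow_pure1 hF2, if_neg (by omega), zero_mul]
      -- second block : p.1 = 1 : (F^(k+1))_{(1,b)} * F_{(0, m-b)} = … δ via pure0? no, F_{(0,m-b)} = δ_{m-b,1}
      have hblock1 : ∑ b ∈ Finset.range (m + 1),
          MvPowerSeries.coeff (fs (1, b)) (F ^ (k + 1)) *
            MvPowerSeries.coeff (fs (1 - 1, m - b)) F
          = if 1 ≤ m then MvPowerSeries.coeff (fs (1, m - 1)) (F ^ (k + 1)) else 0 := by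
        by_cases hm : 1 ≤ m
        · rw [if_pos hm, Finset.sum_eq_single (m - 1)]
          · rw [show ((1 : ℕ) - 1) = 0 from rfl, show m - (m - 1) = 1 from by omega,
              coeff_F_pure1 hF2 1, if_pos rfl, mul_one]
          · intro b hb hbne
            rw [Finset.mem_range] at hb
            rw [show ((1 : ℕ) - 1) = 0 from rfl, coeff_F_pure1 hF2 (m - b),
              if_neg (by omega), mul_zero]
          · intro hmem
            exact absurd (Finset.mem_range.mpr (by omega)) hmem
        · rw [if_neg hm]
          refine Finset.sum_eq_zero fun b hb => ?_
          rw [Finset.mem_range] at hb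
          rw [show ((1 : ℕ) - 1) = 0 from rfl, coeff_F_pure1 hF2 (m - b),
            if_neg (by omega), mul_zero]
      rw [hblock0, hblock1]
      by_cases hkm : k + 1 ≤ m
      · have h1m : 1 ≤ m := by omega
        rw [if_pos hkm, if_pos h1m, ih (m - 1), if_pos (by omega : k ≤ m - 1),
          show m - 1 - k = m - (k + 1) from by omega]
        push_cast
        ring
      · rw [if_neg hkm, zero_add, mul_zero]
        by_cases hm : 1 ≤ m
        · rw [if_pos hm, ih (m - 1), if_neg (by omega : ¬ k ≤ m - 1), mul_zero]
        · rw [if_neg hm]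

/-- Replacing factors by their linear parts in a top-degree coefficient. -/
theorem coeff_prod_lin {A B LA LB : MvPowerSeries σ R}
    (hA : MvPowerSeries.constantCoeff A = 0) (hB : MvPowerSeries.constantCoeff B = 0)
    (hLA : MvPowerSeries.constantCoeff LA = 0) (hLB : MvPowerSeries.constantCoeff LB = 0)
    (dA : GeW 2 (A - LA)) (dB : GeW 2 (B - LB)) {d : σ →₀ ℕ} {i j : ℕ} (hd : wt d ≤ i + j) :
    MvPowerSeries.coeff d (A ^ i * B ^ j) = MvPowerSeries.coeff d (LA ^ i * LB ^ j) := by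
  refine coeff_eq_of_sub_geW ?_ (by omega : wt d < i + j + 1)
  have key : A ^ i * B ^ j - LA ^ i * LB ^ j
      = (A ^ i - LA ^ i) * B ^ j + LA ^ i * (B ^ j - LB ^ j) := by ring
  rw [key]
  have h1 : GeW (i + 1 + j) ((A ^ i - LA ^ i) * B ^ j) :=
    (pow_sub_pow_geW (geW_one hA) (geW_one hLA) dA i).mul ((geW_one hB).pow j)
  have h2 : GeW (i + (j + 1)) (LA ^ i * (B ^ j - LB ^ j)) :=
    ((geW_one hLA).pow i).mul (pow_sub_pow_geW (geW_one hB) (geW_one hLB) dB j)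
  exact (h1.mono (by omega)).add (h2.mono (by omega))

/-- The linear part of `subst2 F A B` is `A + B` whenever `F` is a formal group law. -/
theorem subst2_sub_linear {F : MvPowerSeries (Fin 2) R}
    (hF1 : subst2 F (MvPowerSeries.X 0) 0 = (MvPowerSeries.X 0 : MvPowerSeries (Fin 2) R))
    (hF2 : subst2 F 0 (MvPowerSeries.X 1) = (MvPowerSeries.X 1 : MvPowerSeries (Fin 2) R))
    {A B : MvPowerSeries σ R} (hA : MvPowerSeries.constantCoeff A = 0)
    (hB : MvPowerSeries.constantCoeff B = 0) :
    GeW 2 (subst2 F A B - (A + B)) := by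
  intro e he
  rw [map_sub, sub_eq_zero, coeff_subst2 F hA hB e (N := 1) (by omega)]
  have expand : Finset.range 2 ×ˢ Finset.range 2 = {((0:ℕ),(0:ℕ)), (0,1), (1,0), (1,1)} := by
    decide
  rw [expand, Finset.sum_insert (by decide), Finset.sum_insert (by decide),
    Finset.sum_insert (by decide), Finset.sum_singleton]
  have c00 : MvPowerSeries.coeff (fs (0, 0)) F = 0 := by
    rw [fs_zero]; exact constantCoeff_FGL hF1
  have c10 : MvPowerSeries.coeff (fs (1, 0)) F = 1 := by rw [coeff_F_pure0 hF1]; simp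
  have c01 : MvPowerSeries.coeff (fs (0, 1)) F = 1 := by rw [coeff_F_pure1 hF2]; simp
  have c11 : MvPowerSeries.coeff e (A ^ 1 * B ^ 1) = 0 := by
    rw [pow_one, pow_one]
    exact ((geW_one hA).mul (geW_one hB)).coeff_eq_zero he
  rw [c00, c10, c01, c11, map_add]
  simp [add_comm]

/-- Fin 3 exponents. -/
def ft3 (a b c : ℕ) : Fin 3 →₀ ℕ :=
  Finsupp.single 0 a + (Finsupp.single 1 b + Finsupp.single 2 c)

theorem ft3_apply0 (a b c : ℕ) : ft3 a b c 0 = a := by simp [ft3, Finsupp.single_apply]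
theorem ft3_apply1 (a b c : ℕ) : ft3 a b c 1 = b := by simp [ft3, Finsupp.single_apply]
theorem ft3_apply2 (a b c : ℕ) : ft3 a b c 2 = c := by simp [ft3, Finsupp.single_apply]

theorem ft3_inj {a b c a' b' c' : ℕ} (h : ft3 a b c = ft3 a' b' c') :
    a = a' ∧ b = b' ∧ c = c' := by
  refine ⟨?_, ?_, ?_⟩
  · have := congrArg (fun g : Fin 3 →₀ ℕ => g 0) h; simpa [ft3_apply0] using this
  · have := congrArg (fun g : Fin 3 →₀ ℕ => g 1) h; simpa [ft3_apply1] using this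
  · have := congrArg (fun g : Fin 3 →₀ ℕ => g 2) h; simpa [ft3_apply2] using this

theorem wt_ft3 (a b c : ℕ) : wt (ft3 a b c) = a + b + c := by
  rw [ft3, wt_add, wt_add, wt_single, wt_single, wt_single]; omega

/-- Binomial expansion of `(X s + X t)^m` into monomials. -/
theorem pair_pow_eq (s t : σ) (m : ℕ) :
    (MvPowerSeries.X s + MvPowerSeries.X t : MvPowerSeries σ R) ^ m
      = ∑ i ∈ Finset.range (m + 1),
          MvPowerSeries.monomial (Finsupp.single s i + Finsupp.single t (m - i))
            ((m.choose i : ℕ) : R) := by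
  rw [add_pow]
  refine Finset.sum_congr rfl fun i hi => ?_
  rw [MvPowerSeries.X_pow_eq, MvPowerSeries.X_pow_eq, MvPowerSeries.monomial_mul_monomial,
    one_mul]
  rw [show ((m.choose i : ℕ) : MvPowerSeries σ R)
      = MvPowerSeries.C ((m.choose i : ℕ) : R) from (map_natCast (MvPowerSeries.C) _).symm]
  rw [show (MvPowerSeries.C ((m.choose i : ℕ) : R))
      = MvPowerSeries.monomial 0 ((m.choose i : ℕ) : R) from rfl]
  rw [MvPowerSeries.monomial_mul_monomial, one_mul, add_zero]

theorem coeff_T1 (p1 p2 j k : ℕ) :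
    MvPowerSeries.coeff (ft3 1 j k)
        ((MvPowerSeries.X 0 : MvPowerSeries (Fin 3) R) ^ p1 *
          (MvPowerSeries.X 1 + MvPowerSeries.X 2) ^ p2)
      = if p1 = 1 ∧ p2 = j + k then ((p2.choose j : ℕ) : R) else 0 := by
  rw [pair_pow_eq, Finset.mul_sum, map_sum]
  have tm : ∀ i : ℕ,
      MvPowerSeries.coeff (ft3 1 j k)
        ((MvPowerSeries.X 0 : MvPowerSeries (Fin 3) R) ^ p1 *
          MvPowerSeries.monomial (Finsupp.single 1 i + Finsupp.single 2 (p2 - i))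
            ((p2.choose i : ℕ) : R))
      = if ft3 1 j k = ft3 p1 i (p2 - i) then ((p2.choose i : ℕ) : R) else 0 := by
    intro i
    rw [MvPowerSeries.X_pow_eq, MvPowerSeries.monomial_mul_monomial, one_mul]
    exact MvPowerSeries.coeff_monomial _ _ _
  simp only [tm]
  by_cases hc : p1 = 1 ∧ p2 = j + k
  · obtain ⟨h1, h2⟩ := hc
    rw [if_pos ⟨h1, h2⟩, Finset.sum_eq_single j]
    · rw [if_pos (by subst h1 h2; congr 1; omega)]
    · intro i _ hi
      rw [if_neg (fun hc' => hi ((ft3_inj hc').2.1.symm))]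
    · intro hmem
      exact absurd (Finset.mem_range.mpr (by omega)) hmem
  · rw [if_neg hc]
    refine Finset.sum_eq_zero fun i hi => ?_
    rw [Finset.mem_range] at hi
    rw [if_neg]
    intro hc'
    obtain ⟨e1, e2, e3⟩ := ft3_inj hc'
    exact hc ⟨e1.symm, by omega⟩

theorem coeff_T2 (p1 p2 j k : ℕ) :
    MvPowerSeries.coeff (ft3 1 j k)
        ((MvPowerSeries.X 1 : MvPowerSeries (Fin 3) R) ^ p1 * MvPowerSeries.X 2 ^ p2) = 0 := by
  rw [MvPowerSeries.X_pow_eq, MvPowerSeries.X_pow_eq, MvPowerSeries.monomial_mul_monomial,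
    one_mul, MvPowerSeries.coeff_monomial, if_neg]
  intro hc
  have := congrArg (fun g : Fin 3 →₀ ℕ => g 0) hc
  simp only [ft3_apply0] at this
  simp [Finsupp.single_apply] at this

theorem coeff_T3 (p1 p2 j k : ℕ) (hk : 1 ≤ k) :
    MvPowerSeries.coeff (ft3 1 j k)
        ((MvPowerSeries.X 0 : MvPowerSeries (Fin 3) R) ^ p1 * MvPowerSeries.X 1 ^ p2) = 0 := by
  rw [MvPowerSeries.X_pow_eq, MvPowerSeries.X_pow_eq, MvPowerSeries.monomial_mul_monomial,
    one_mul, MvPowerSeries.coeff_monomial, if_neg]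
  intro hc
  have := congrArg (fun g : Fin 3 →₀ ℕ => g 2) hc
  simp only [ft3_apply2] at this
  rw [Finsupp.add_apply, Finsupp.single_apply, Finsupp.single_apply] at this
  simp at this
  omega

theorem coeff_T4 (p1 p2 j k : ℕ) :
    MvPowerSeries.coeff (ft3 1 j k)
        (((MvPowerSeries.X 0 + MvPowerSeries.X 1 : MvPowerSeries (Fin 3) R)) ^ p1 *
          MvPowerSeries.X 2 ^ p2)
      = if p1 = 1 + j ∧ p2 = k then ((1 + j : ℕ) : R) else 0 := by
  rw [pair_pow_eq, Finset.sum_mul, map_sum]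
  have tm : ∀ i : ℕ,
      MvPowerSeries.coeff (ft3 1 j k)
        (MvPowerSeries.monomial (Finsupp.single 0 i + Finsupp.single 1 (p1 - i))
            ((p1.choose i : ℕ) : R) * (MvPowerSeries.X 2 : MvPowerSeries (Fin 3) R) ^ p2)
      = if ft3 1 j k = ft3 i (p1 - i) p2 then ((p1.choose i : ℕ) : R) else 0 := by
    intro i
    rw [MvPowerSeries.X_pow_eq, MvPowerSeries.monomial_mul_monomial, mul_one, add_assoc]
    exact MvPowerSeries.coeff_monomial _ _ _
  simp only [tm]
  by_cases hc : p1 = 1 + j ∧ p2 = k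
  · obtain ⟨h1, h2⟩ := hc
    rw [if_pos ⟨h1, h2⟩, Finset.sum_eq_single 1]
    · rw [if_pos (by subst h2; congr 1 <;> omega)]
      subst h1
      rw [Nat.choose_one_right]
    · intro i _ hi
      rw [if_neg (fun hc' => hi ((ft3_inj hc').1.symm))]
    · intro hmem
      exact absurd (Finset.mem_range.mpr (by omega)) hmem
  · rw [if_neg hc]
    refine Finset.sum_eq_zero fun i hi => ?_
    rw [Finset.mem_range] at hi
    rw [if_neg]
    intro hc'
    obtain ⟨e1, e2, e3⟩ := ft3_inj hc'
    exact hc ⟨by omega, e3.symm⟩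

/-- Extraction of top-weight coefficients from `subst2 Δ A B`, assuming all lower-weight and all
pure coefficients of `Δ` vanish. -/
theorem coeff_subst2_top {Δ : MvPowerSeries (Fin 2) R} {n : ℕ}
    (hlow : ∀ p : ℕ × ℕ, p.1 + p.2 < n → MvPowerSeries.coeff (fs p) Δ = 0)
    (hp0 : ∀ m, MvPowerSeries.coeff (fs (m, 0)) Δ = 0)
    (hp1 : ∀ m, MvPowerSeries.coeff (fs (0, m)) Δ = 0)
    {A B LA LB : MvPowerSeries (Fin 3) R}
    (hA : MvPowerSeries.constantCoeff A = 0)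
    (hB : MvPowerSeries.constantCoeff B = 0)
    (hLA : MvPowerSeries.constantCoeff LA = 0)
    (hLB : MvPowerSeries.constantCoeff LB = 0)
    (dA : GeW 2 (A - LA)) (dB : GeW 2 (B - LB))
    {d : Fin 3 →₀ ℕ} (hd : wt d = n) :
    MvPowerSeries.coeff d (subst2 Δ A B)
      = ∑ p ∈ Finset.range (n + 1) ×ˢ Finset.range (n + 1),
          (if p.1 + p.2 = n ∧ 1 ≤ p.1 ∧ 1 ≤ p.2
            then MvPowerSeries.coeff (fs p) Δ * MvPowerSeries.coeff d (LA ^ p.1 * LB ^ p.2)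
            else 0) := by
  rw [coeff_subst2 Δ hA hB d (N := n) (le_of_eq hd)]
  refine Finset.sum_congr rfl fun p hp => ?_
  by_cases h : p.1 + p.2 = n ∧ 1 ≤ p.1 ∧ 1 ≤ p.2
  · rw [if_pos h, coeff_prod_lin hA hB hLA hLB dA dB (by omega)]
  · rw [if_neg h]
    rcases Nat.lt_trichotomy (p.1 + p.2) n with hlt | heq | hgt
    · rw [hlow p hlt, zero_mul]
    · have hz : p.1 = 0 ∨ p.2 = 0 := by
        by_contra hc
        push_neg at hc
        exact h ⟨heq, by omega, by omega⟩
      rcases hz with h0 | h0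
      · rw [show p = (0, p.2) from by cases p; simp_all, hp1, zero_mul]
      · rw [show p = (p.1, 0) from by cases p; simp_all, hp0, zero_mul]
    · rw [coeff_pow_mul_eq_zero hA hB (by omega), mul_zero]

/-- The 2-cocycle identity for the discrepancy `Δ = f(F) - f(x) - f(y)`, valid for every `f`. -/
theorem cocycle {F : MvPowerSeries (Fin 2) R} (hF : IsFGL F) (f : PowerSeries R) :
    subst2 (pcompMv f F - (toMv 0 f + toMv 1 f)) (MvPowerSeries.X 0)
        (subst2 F (MvPowerSeries.X 1) (MvPowerSeries.X 2))
      + subst2 (pcompMv f F - (toMv 0 f + toMv 1 f)) (MvPowerSeries.X 1)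
          (MvPowerSeries.X 2 : MvPowerSeries (Fin 3) R)
    = subst2 (pcompMv f F - (toMv 0 f + toMv 1 f)) (MvPowerSeries.X 0) (MvPowerSeries.X 1)
      + subst2 (pcompMv f F - (toMv 0 f + toMv 1 f))
          (subst2 F (MvPowerSeries.X 0) (MvPowerSeries.X 1))
          (MvPowerSeries.X 2 : MvPowerSeries (Fin 3) R) := by
  obtain ⟨hF1, hF2, hF3⟩ := hF
  have hF0 := constantCoeff_FGL hF1
  have hX0 : MvPowerSeries.constantCoeff (σ := Fin 3) (R := R) (MvPowerSeries.X 0) = 0 :=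
    MvPowerSeries.constantCoeff_X _
  have hX1 : MvPowerSeries.constantCoeff (σ := Fin 3) (R := R) (MvPowerSeries.X 1) = 0 :=
    MvPowerSeries.constantCoeff_X _
  have hX2 : MvPowerSeries.constantCoeff (σ := Fin 3) (R := R) (MvPowerSeries.X 2) = 0 :=
    MvPowerSeries.constantCoeff_X _
  have hW : MvPowerSeries.constantCoeff (σ := Fin 3) (R := R)
      (subst2 F (MvPowerSeries.X 1) (MvPowerSeries.X 2)) = 0 := by
    rw [constantCoeff_subst2 _ hX1 hX2, hF0]
  have hU : MvPowerSeries.constantCoeff (σ := Fin 3) (R := R)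
      (subst2 F (MvPowerSeries.X 0) (MvPowerSeries.X 1)) = 0 := by
    rw [constantCoeff_subst2 _ hX0 hX1, hF0]
  have E : ∀ A B : MvPowerSeries (Fin 3) R,
      MvPowerSeries.constantCoeff A = 0 → MvPowerSeries.constantCoeff B = 0 →
      pcompMv f (subst2 F A B) = pcompMv f A + pcompMv f B
        + subst2 (pcompMv f F - (toMv 0 f + toMv 1 f)) A B := by
    intro A B hA hB
    rw [pcompMv_subst2 f F hF0 hA hB]
    have dec : pcompMv f F = (toMv 0 f + toMv 1 f) + (pcompMv f F - (toMv 0 f + toMv 1 f)) := by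
      ring
    conv_lhs => rw [dec]
    rw [subst2_add _ _ hA hB, subst2_add _ _ hA hB, subst2_toMv0 f hA hB, subst2_toMv1 f hA hB]
  have h1 := E (MvPowerSeries.X 0) (subst2 F (MvPowerSeries.X 1) (MvPowerSeries.X 2)) hX0 hW
  have h2 := E (MvPowerSeries.X 1) (MvPowerSeries.X 2) hX1 hX2
  have h3 := E (subst2 F (MvPowerSeries.X 0) (MvPowerSeries.X 1)) (MvPowerSeries.X 2) hU hX2
  have h4 := E (MvPowerSeries.X 0) (MvPowerSeries.X 1) hX0 hX1
  have hc := congrArg (pcompMv f) hF3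
  linear_combination -h1 - h2 + h3 + h4 + hc

/-- In a `ℚ`-algebra, multiplication by a nonzero natural number is injective. -/
theorem cancel_natCast {S : Type*} [CommRing S] [Algebra ℚ S] {x : S} {s : ℕ} (hs : s ≠ 0)
    (h : x * ((s : ℕ) : S) = 0) : x = 0 := by
  have hs0 : ((s : ℕ) : ℚ) ≠ 0 := Nat.cast_ne_zero.mpr hs
  calc x = x * (((s : ℕ) : S) * algebraMap ℚ S (((s : ℕ) : ℚ))⁻¹) := by
        rw [show ((s : ℕ) : S) = algebraMap ℚ S ((s : ℕ) : ℚ) from (map_natCast _ _).symm,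
          ← map_mul, mul_inv_cancel₀ hs0, map_one, mul_one]
    _ = (x * ((s : ℕ) : S)) * algebraMap ℚ S (((s : ℕ) : ℚ))⁻¹ := by ring
    _ = 0 := by rw [h, zero_mul]

end Machinery


-- STATEMENT 2
theorem statement2 {R : Type*} [CommRing R] [Algebra ℚ R]
    (F : MvPowerSeries (Fin 2) R) (hF : IsFGL F) :
    ∃! f : PowerSeries R,
      PowerSeries.constantCoeff f = 0 ∧ PowerSeries.coeff 1 f = 1 ∧
        pcompMv f F = toMv 0 f + toMv 1 f := by
  classical
  obtain ⟨hF1, hF2, hF3⟩ := hF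
  have hF0 : MvPowerSeries.constantCoeff F = 0 := constantCoeff_FGL hF1
  -- the series v(t) = ∂F/∂x(0,t) and its inverse w
  set v : PowerSeries R := PowerSeries.mk fun t => MvPowerSeries.coeff (fs (1, t)) F with hvdef
  have hv0 : PowerSeries.constantCoeff v = 1 := by
    rw [← PowerSeries.coeff_zero_eq_constantCoeff_apply, hvdef, PowerSeries.coeff_mk,
      coeff_F_pure0 hF1]
    simp
  set w : PowerSeries R := PowerSeries.invOfUnit v 1 with hwdef
  have hvw : w * v = 1 := by
    rw [mul_comm]
    exact PowerSeries.mul_invOfUnit v 1 (by rw [hv0]; simp)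
  -- the candidate logarithm f
  set f : PowerSeries R := PowerSeries.mk fun n =>
    if n = 0 then 0 else algebraMap ℚ R (((n : ℕ) : ℚ))⁻¹ * PowerSeries.coeff (n - 1) w
    with hfdef
  have hf0 : PowerSeries.coeff 0 f = 0 := by rw [hfdef, PowerSeries.coeff_mk, if_pos rfl]
  have hfc0 : PowerSeries.constantCoeff f = 0 := by
    rw [← PowerSeries.coeff_zero_eq_constantCoeff_apply]; exact hf0
  have hw0 : PowerSeries.coeff 0 w = 1 := by
    rw [PowerSeries.coeff_zero_eq_constantCoeff_apply, hwdef, PowerSeries.constantCoeff_invOfUnit]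
    simp
  have hfc1 : PowerSeries.coeff 1 f = 1 := by
    rw [hfdef, PowerSeries.coeff_mk, if_neg one_ne_zero]
    norm_num [hw0]
  have KA : ∀ i : ℕ, ((i + 1 : ℕ) : R) * PowerSeries.coeff (i + 1) f
      = PowerSeries.coeff i w := by
    intro i
    rw [hfdef, PowerSeries.coeff_mk, if_neg (Nat.succ_ne_zero i), ← mul_assoc,
      show ((i + 1 : ℕ) : R) = algebraMap ℚ R ((i + 1 : ℕ) : ℚ) from (map_natCast _ _).symm,
      ← map_mul, mul_inv_cancel₀ (by exact_mod_cast Nat.succ_ne_zero i), map_one, one_mul,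
      Nat.add_sub_cancel]
  -- the discrepancy Δ
  set Δ : MvPowerSeries (Fin 2) R := pcompMv f F - (toMv 0 f + toMv 1 f) with hΔdef
  -- pure coefficients of Δ vanish
  have hp0 : ∀ m, MvPowerSeries.coeff (fs (m, 0)) Δ = 0 := by
    intro m
    rw [hΔdef, map_sub, map_add,
      coeff_pcompMv f hF0 _ (N := m) (by simp [wt_fs]),
      coeff_toMv0_fs, coeff_toMv1_fs]
    have hsum : (∑ k ∈ Finset.range (m + 1),
        PowerSeries.coeff k f * MvPowerSeries.coeff (fs (m, 0)) (F ^ k))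
        = PowerSeries.coeff m f := by
      rw [Finset.sum_eq_single m]
      · rw [coeff_pow_pure0 hF1, if_pos rfl, mul_one]
      · intro k _ hk
        rw [coeff_pow_pure0 hF1, if_neg hk, mul_zero]
      · intro hmem; exact absurd (Finset.mem_range.mpr (by omega)) hmem
    rw [hsum]
    by_cases hm : m = 0
    · subst hm; simp [hf0]
    · rw [if_pos rfl, if_neg hm]; simp
  have hp1 : ∀ m, MvPowerSeries.coeff (fs (0, m)) Δ = 0 := by
    intro m
    rw [hΔdef, map_sub, map_add,
      coeff_pcompMv f hF0 _ (N := m) (by simp [wt_fs]),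
      coeff_toMv0_fs, coeff_toMv1_fs]
    have hsum : (∑ k ∈ Finset.range (m + 1),
        PowerSeries.coeff k f * MvPowerSeries.coeff (fs (0, m)) (F ^ k))
        = PowerSeries.coeff m f := by
      rw [Finset.sum_eq_single m]
      · rw [coeff_pow_pure1 hF2, if_pos rfl, mul_one]
      · intro k _ hk
        rw [coeff_pow_pure1 hF2, if_neg hk, mul_zero]
      · intro hmem; exact absurd (Finset.mem_range.mpr (by omega)) hmem
    rw [hsum]
    by_cases hm : m = 0
    · subst hm; simp [hf0]
    · rw [if_pos rfl, if_neg hm]; simp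
  -- mixed coefficients of the form (1, t)
  have hmix : ∀ t : ℕ, 1 ≤ t → MvPowerSeries.coeff (fs (1, t)) Δ = 0 := by
    intro t ht
    have e1 : MvPowerSeries.coeff (fs (1, t)) (pcompMv f F) = 0 := by
      rw [coeff_pcompMv f hF0 _ (N := t + 1) (by simp [wt_fs]; omega)]
      rw [Finset.sum_range_succ']
      have g0 : PowerSeries.coeff 0 f * MvPowerSeries.coeff (fs (1, t)) (F ^ 0) = 0 := by
        rw [hf0, zero_mul]
      rw [g0, add_zero]
      have gi : ∀ i ∈ Finset.range (t + 1),
          PowerSeries.coeff (i + 1) f * MvPowerSeries.coeff (fs (1, t)) (F ^ (i + 1))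
          = PowerSeries.coeff i w * MvPowerSeries.coeff (fs (1, t - i)) F := by
        intro i hi
        rw [Finset.mem_range] at hi
        rw [coeff_pow_mixed hF1 hF2, if_pos (by omega)]
        rw [show PowerSeries.coeff (i + 1) f * (((i : R) + 1) *
              MvPowerSeries.coeff (fs (1, t - i)) F)
            = (((i + 1 : ℕ) : R) * PowerSeries.coeff (i + 1) f) *
              MvPowerSeries.coeff (fs (1, t - i)) F from by push_cast; ring, KA i]
      rw [Finset.sum_congr rfl gi]
      have hconv : ∑ i ∈ Finset.range (t + 1),
          PowerSeries.coeff i w * MvPowerSeries.coeff (fs (1, t - i)) F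
          = PowerSeries.coeff t (w * v) := by
        rw [PowerSeries.coeff_mul, Finset.Nat.sum_antidiagonal_eq_sum_range_succ_mk]
        exact Finset.sum_congr rfl fun i _ => by rw [hvdef, PowerSeries.coeff_mk]
      rw [hconv, hvw, PowerSeries.coeff_one, if_neg (by omega)]
    have e2 : MvPowerSeries.coeff (fs (1, t)) (toMv 0 f) = 0 := by
      rw [coeff_toMv0_fs]
      exact if_neg (by omega)
    have e3 : MvPowerSeries.coeff (fs (1, t)) (toMv 1 f) = 0 := by
      rw [coeff_toMv1_fs]
      exact if_neg (by omega)
    rw [hΔdef, map_sub, map_add, e1, e2, e3]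
    simp
  -- the cocycle identity
  have coc := cocycle ⟨hF1, hF2, hF3⟩ f
  rw [← hΔdef] at coc
  -- constant coefficients in Fin 3
  have hX0 : MvPowerSeries.constantCoeff (σ := Fin 3) (R := R) (MvPowerSeries.X 0) = 0 :=
    MvPowerSeries.constantCoeff_X _
  have hX1 : MvPowerSeries.constantCoeff (σ := Fin 3) (R := R) (MvPowerSeries.X 1) = 0 :=
    MvPowerSeries.constantCoeff_X _
  have hX2 : MvPowerSeries.constantCoeff (σ := Fin 3) (R := R) (MvPowerSeries.X 2) = 0 :=
    MvPowerSeries.constantCoeff_X _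
  have hW : MvPowerSeries.constantCoeff (σ := Fin 3) (R := R)
      (subst2 F (MvPowerSeries.X 1) (MvPowerSeries.X 2)) = 0 := by
    rw [constantCoeff_subst2 _ hX1 hX2, hF0]
  have hU : MvPowerSeries.constantCoeff (σ := Fin 3) (R := R)
      (subst2 F (MvPowerSeries.X 0) (MvPowerSeries.X 1)) = 0 := by
    rw [constantCoeff_subst2 _ hX0 hX1, hF0]
  have hL12 : MvPowerSeries.constantCoeff (σ := Fin 3) (R := R)
      (MvPowerSeries.X 1 + MvPowerSeries.X 2) = 0 := by rw [map_add, hX1, hX2, add_zero]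
  have hL01 : MvPowerSeries.constantCoeff (σ := Fin 3) (R := R)
      (MvPowerSeries.X 0 + MvPowerSeries.X 1) = 0 := by rw [map_add, hX0, hX1, add_zero]
  have dX0 : GeW 2 ((MvPowerSeries.X 0 : MvPowerSeries (Fin 3) R) - MvPowerSeries.X 0) := by
    rw [sub_self]; exact geW_zero'
  have dX1 : GeW 2 ((MvPowerSeries.X 1 : MvPowerSeries (Fin 3) R) - MvPowerSeries.X 1) := by
    rw [sub_self]; exact geW_zero'
  have dX2 : GeW 2 ((MvPowerSeries.X 2 : MvPowerSeries (Fin 3) R) - MvPowerSeries.X 2) := by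
    rw [sub_self]; exact geW_zero'
  have dW : GeW 2 (subst2 F (MvPowerSeries.X 1) (MvPowerSeries.X 2 : MvPowerSeries (Fin 3) R)
      - (MvPowerSeries.X 1 + MvPowerSeries.X 2)) := subst2_sub_linear hF1 hF2 hX1 hX2
  have dU : GeW 2 (subst2 F (MvPowerSeries.X 0) (MvPowerSeries.X 1 : MvPowerSeries (Fin 3) R)
      - (MvPowerSeries.X 0 + MvPowerSeries.X 1)) := subst2_sub_linear hF1 hF2 hX0 hX1
  -- main induction : all coefficients of Δ vanish
  have key : ∀ n : ℕ, ∀ p : ℕ × ℕ, p.1 + p.2 = n → MvPowerSeries.coeff (fs p) Δ = 0 := by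
    intro n
    induction n using Nat.strong_induction_on with
    | _ n IH =>
      rintro ⟨s, t⟩ hp
      simp only at hp
      rcases Nat.eq_zero_or_pos t with ht | ht
      · subst ht; exact hp0 s
      rcases Nat.eq_zero_or_pos s with hs | hs
      · subst hs; exact hp1 t
      rcases eq_or_lt_of_le (show 1 ≤ s from hs) with hs1 | hs2
      · rw [← hs1]; exact hmix t ht
      -- now s ≥ 2, t ≥ 1
      have hlow : ∀ q : ℕ × ℕ, q.1 + q.2 < n → MvPowerSeries.coeff (fs q) Δ = 0 :=
        fun q hq => IH (q.1 + q.2) (by omega) q rfl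
      set j := s - 1 with hj
      have hd : wt (ft3 1 j t) = n := by rw [wt_ft3]; omega
      have eA : MvPowerSeries.coeff (ft3 1 j t)
          (subst2 Δ (MvPowerSeries.X 0) (subst2 F (MvPowerSeries.X 1) (MvPowerSeries.X 2)))
          = MvPowerSeries.coeff (fs (1, j + t)) Δ * (((j + t).choose j : ℕ) : R) := by
        rw [coeff_subst2_top hlow hp0 hp1 hX0 hW hX0 hL12 dX0 dW hd]
        rw [Finset.sum_eq_single ((1 : ℕ), j + t)]
        · rw [if_pos ⟨by omega, by omega, by omega⟩, coeff_T1, if_pos ⟨rfl, rfl⟩]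
        · intro p _ hpne
          by_cases hcnd : p.1 + p.2 = n ∧ 1 ≤ p.1 ∧ 1 ≤ p.2
          · rw [if_pos hcnd, coeff_T1, if_neg (fun hc => hpne (Prod.ext hc.1 hc.2)), mul_zero]
          · rw [if_neg hcnd]
        · intro hmem
          exact absurd (by simp only [Finset.mem_product, Finset.mem_range]; omega) hmem
      have eB : MvPowerSeries.coeff (ft3 1 j t)
          (subst2 Δ (MvPowerSeries.X 1) (MvPowerSeries.X 2)) = 0 := by
        rw [coeff_subst2_top hlow hp0 hp1 hX1 hX2 hX1 hX2 dX1 dX2 hd]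
        refine Finset.sum_eq_zero fun p _ => ?_
        by_cases hcnd : p.1 + p.2 = n ∧ 1 ≤ p.1 ∧ 1 ≤ p.2
        · rw [if_pos hcnd, coeff_T2, mul_zero]
        · rw [if_neg hcnd]
      have eC : MvPowerSeries.coeff (ft3 1 j t)
          (subst2 Δ (MvPowerSeries.X 0) (MvPowerSeries.X 1)) = 0 := by
        rw [coeff_subst2_top hlow hp0 hp1 hX0 hX1 hX0 hX1 dX0 dX1 hd]
        refine Finset.sum_eq_zero fun p _ => ?_
        by_cases hcnd : p.1 + p.2 = n ∧ 1 ≤ p.1 ∧ 1 ≤ p.2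
        · rw [if_pos hcnd, coeff_T3 _ _ _ _ ht, mul_zero]
        · rw [if_neg hcnd]
      have eD : MvPowerSeries.coeff (ft3 1 j t)
          (subst2 Δ (subst2 F (MvPowerSeries.X 0) (MvPowerSeries.X 1)) (MvPowerSeries.X 2))
          = MvPowerSeries.coeff (fs (1 + j, t)) Δ * ((1 + j : ℕ) : R) := by
        rw [coeff_subst2_top hlow hp0 hp1 hU hX2 hL01 hX2 dU dX2 hd]
        rw [Finset.sum_eq_single ((1 + j : ℕ), t)]
        · rw [if_pos ⟨by omega, by omega, by omega⟩, coeff_T4, if_pos ⟨rfl, rfl⟩]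
        · intro p _ hpne
          by_cases hcnd : p.1 + p.2 = n ∧ 1 ≤ p.1 ∧ 1 ≤ p.2
          · rw [if_pos hcnd, coeff_T4, if_neg (fun hc => hpne (Prod.ext hc.1 hc.2)), mul_zero]
          · rw [if_neg hcnd]
        · intro hmem
          exact absurd (by simp only [Finset.mem_product, Finset.mem_range]; omega) hmem
      have hco := congrArg (MvPowerSeries.coeff (ft3 1 j t)) coc
      rw [map_add, map_add, eA, eB, eC, eD, add_zero, zero_add] at hco
      rw [hmix (j + t) (by omega), zero_mul] at hco
      rw [show 1 + j = s from by omega] at hco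
      exact cancel_natCast (by omega : s ≠ 0) hco.symm
  have hΔ0 : Δ = 0 := by
    ext d
    rw [map_zero, eq_fs d]
    exact key (d 0 + d 1) (d 0, d 1) rfl
  rw [hΔdef] at hΔ0
  have hMain : pcompMv f F = toMv 0 f + toMv 1 f := sub_eq_zero.mp hΔ0
  -- assemble existence and uniqueness
  refine ⟨f, ⟨hfc0, hfc1, hMain⟩, ?_⟩
  intro g hg
  obtain ⟨hg0, hg1, hgeq⟩ := hg
  have hsubeq : pcompMv (g - f) F = toMv 0 (g - f) + toMv 1 (g - f) := by
    rw [pcompMv_sub g f hF0, toMv_sub, toMv_sub, hgeq, hMain]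
    ring
  have hh0 : PowerSeries.coeff 0 (g - f) = 0 := by
    have hgc : PowerSeries.coeff 0 g = 0 := by
      rw [PowerSeries.coeff_zero_eq_constantCoeff_apply, hg0]
    rw [map_sub, hgc, hf0, sub_zero]
  have hh1 : PowerSeries.coeff 1 (g - f) = 0 := by rw [map_sub, hg1, hfc1, sub_self]
  have hkey : ∀ n, PowerSeries.coeff n (g - f) = 0 := by
    intro n
    induction n using Nat.strong_induction_on with
    | _ n IH =>
      match n, IH with
      | 0, _ => exact hh0
      | 1, _ => exact hh1
      | (n + 2), IH =>
        have hco := congrArg (MvPowerSeries.coeff (fs (1, n + 1))) hsubeq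
        rw [map_add, coeff_toMv0_fs, coeff_toMv1_fs, if_neg (by omega), if_neg (by omega),
          add_zero] at hco
        rw [coeff_pcompMv (g - f) hF0 _ (N := n + 2) (by simp [wt_fs]; omega)] at hco
        have hterm : ∀ k ∈ Finset.range (n + 3), k ≠ n + 2 →
            PowerSeries.coeff k (g - f) *
              MvPowerSeries.coeff (fs (1, n + 1)) (F ^ k) = 0 := by
          intro k hk hkne
          rcases Nat.eq_zero_or_pos k with hk0 | hk1
          · subst hk0
            rw [pow_zero, MvPowerSeries.coeff_one, if_neg, mul_zero]
            intro hc
            have := congrArg (fun g : Fin 2 →₀ ℕ => g 0) hc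
            simp [fs_apply0] at this
          · rw [Finset.mem_range] at hk
            rw [IH k (by omega), zero_mul]
        rw [Finset.sum_eq_single (n + 2) hterm
          (fun hmem => absurd (Finset.mem_range.mpr (by omega)) hmem)] at hco
        rw [show (n + 2) = (n + 1) + 1 from rfl, coeff_pow_mixed hF1 hF2,
          if_pos (le_refl (n + 1)), Nat.sub_self, coeff_F_pure0 hF1, if_pos rfl, mul_one] at hco
        have hcast : ((n + 1 : ℕ) : R) + 1 = ((n + 2 : ℕ) : R) := by push_cast; ring
        rw [hcast] at hco
        exact cancel_natCast (by omega : n + 2 ≠ 0) hco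
  have hgf : g - f = 0 := PowerSeries.ext fun n => by rw [hkey n, map_zero]
  exact sub_eq_zero.mp hgf


end VFA
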